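/- Let M be an Hadamard manifold and X an M-valued random element with E[ρ(X,p*;β*,ξ*)] < ∞ for some (β*,ξ*,p*). Then for every β ∈ [0,1) and ξ ∈ ∂M the quantile set argmin_{p∈M} E[ρ(X,p;β,ξ)] is nonempty and compact. -/

import Mathlib

open MeasureTheory
open scoped RealInnerProductSpace

/-- Let `M` be an Hadamard manifold (a proper metric space with globally
defined inverse exponential map `log`, `‖log_p x‖ = d(p,x)`, jointly continuous, and
continuous unit radial fields `dir ξ` indexed by boundary points `ξ ∈ Ξ = ∂M`) and `X` an
`M`-valued random element with law `μ` satisfying `E[ρ(X,p*;β*,ξ*)] < ∞` for some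
`(β*,ξ*,p*)`.  Then for every `β ∈ [0,1)` and `ξ ∈ Ξ` the quantile set
`argmin_{p∈M} E[ρ(X,p;β,ξ)]` is nonempty and compact. -/
theorem quantile_set_nonempty_compact
    {M : Type*} [MetricSpace M] [ProperSpace M] [MeasurableSpace M] [BorelSpace M]
    {E : Type*} [NormedAddCommGroup E] [InnerProductSpace ℝ E]
    {Ξ : Type*} (log : M → M → E) (dir : Ξ → M → E)
    (hlog : Continuous fun q : M × M => log q.1 q.2)
    (hnorm : ∀ p x : M, ‖log p x‖ = dist p x)
    (hdir : ∀ ξ : Ξ, Continuous (dir ξ))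
    (hdirunit : ∀ (ξ : Ξ) (p : M), ‖dir ξ p‖ = 1)
    (μ : Measure M) [IsProbabilityMeasure μ]
    (βs : ℝ) (hβs0 : 0 ≤ βs) (hβs1 : βs < 1) (ξs : Ξ) (ps : M)
    (hfin : Integrable (fun x => ‖log ps x‖ + ⟪βs • dir ξs ps, log ps x⟫) μ) :
    ∀ β : ℝ, 0 ≤ β → β < 1 → ∀ ξ : Ξ,
      ({p : M | ∀ q : M,
          (∫ x, (‖log p x‖ + ⟪β • dir ξ p, log p x⟫) ∂μ) ≤
            ∫ x, (‖log q x‖ + ⟪β • dir ξ q, log q x⟫) ∂μ}).Nonempty ∧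
        IsCompact {p : M | ∀ q : M,
          (∫ x, (‖log p x‖ + ⟪β • dir ξ p, log p x⟫) ∂μ) ≤
            ∫ x, (‖log q x‖ + ⟪β • dir ξ q, log q x⟫) ∂μ} := by
  -- pointwise bounds, valid for any admissible (b, z)
  have key : ∀ (b : ℝ), 0 ≤ b → b ≤ 1 → ∀ (z : Ξ) (p x : M),
      (1 - b) * dist p x ≤ ‖log p x‖ + ⟪b • dir z p, log p x⟫ ∧
      |‖log p x‖ + ⟪b • dir z p, log p x⟫| ≤ 2 * dist p x := by
    intro b hb0 hb1 z p x
    have hcs : |⟪b • dir z p, log p x⟫| ≤ b * dist p x := by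
      calc |⟪b • dir z p, log p x⟫| ≤ ‖b • dir z p‖ * ‖log p x‖ :=
            abs_real_inner_le_norm _ _
        _ = b * dist p x := by
            rw [norm_smul, hdirunit, hnorm, Real.norm_eq_abs, abs_of_nonneg hb0, mul_one]
    have hd : (0:ℝ) ≤ dist p x := dist_nonneg
    have h1 := abs_le.1 hcs
    constructor
    · rw [hnorm]; nlinarith [h1.1]
    · rw [abs_le, hnorm]
      constructor <;> nlinarith [h1.1, h1.2]
  have hlogx : ∀ p : M, Continuous fun x => log p x :=
    fun p => hlog.comp (continuous_const.prodMk continuous_id)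
  have hfx : ∀ (b : ℝ) (z : Ξ) (p : M),
      Continuous fun x => ‖log p x‖ + ⟪b • dir z p, log p x⟫ :=
    fun b z p => (hlogx p).norm.add (continuous_const.inner (hlogx p))
  -- integrability of dist ps ·
  have hIps : Integrable (fun x => dist ps x) μ := by
    have hmeas : AEStronglyMeasurable (fun x => dist ps x) μ :=
      (continuous_const.dist continuous_id).aestronglyMeasurable
    refine (hfin.const_mul ((1 - βs)⁻¹)).mono hmeas
      (Filter.Eventually.of_forall fun x => ?_)
    have h := (key βs hβs0 hβs1.le ξs ps x).1
    have hb : (0:ℝ) < 1 - βs := by linarith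
    have h2 : (0:ℝ) ≤ ‖log ps x‖ + ⟪βs • dir ξs ps, log ps x⟫ :=
      le_trans (by positivity) h
    have h3 : dist ps x ≤ (1 - βs)⁻¹ * (‖log ps x‖ + ⟪βs • dir ξs ps, log ps x⟫) := by
      rw [le_inv_mul_iff₀ hb]; linarith
    rw [Real.norm_eq_abs, Real.norm_eq_abs, abs_of_nonneg dist_nonneg,
      abs_of_nonneg (by positivity)]
    exact h3
  have hdist : ∀ p : M, Integrable (fun x => dist p x) μ := by
    intro p
    refine ((integrable_const (dist p ps)).add hIps).mono'
      ((continuous_const.dist continuous_id).aestronglyMeasurable)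
      (Filter.Eventually.of_forall fun x => ?_)
    rw [Real.norm_eq_abs, abs_of_nonneg dist_nonneg]
    exact dist_triangle p ps x
  intro β hβ0 hβ1 ξ
  have h1β : (0:ℝ) < 1 - β := by linarith
  set G : M → ℝ := fun p => ∫ x, (‖log p x‖ + ⟪β • dir ξ p, log p x⟫) ∂μ with hG
  have hInt : ∀ p : M, Integrable (fun x => ‖log p x‖ + ⟪β • dir ξ p, log p x⟫) μ := by
    intro p
    refine ((hdist p).const_mul 2).mono' (hfx β ξ p).aestronglyMeasurable
      (Filter.Eventually.of_forall fun x => ?_)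
    rw [Real.norm_eq_abs]
    exact (key β hβ0 hβ1.le ξ p x).2
  set I : ℝ := ∫ x, dist ps x ∂μ with hI
  have hI0 : 0 ≤ I := integral_nonneg fun x => dist_nonneg
  -- lower bound for G
  have hGlow : ∀ p : M, (1 - β) * dist p ps - (1 - β) * I ≤ G p := by
    intro p
    have h1 : ∫ x, (1 - β) * dist p x ∂μ ≤ G p :=
      integral_mono ((hdist p).const_mul _) (hInt p)
        (fun x => (key β hβ0 hβ1.le ξ p x).1)
    rw [integral_const_mul] at h1
    have h2 : dist p ps - I ≤ ∫ x, dist p x ∂μ := by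
      have he : ∫ x, (dist p ps - dist ps x) ∂μ = dist p ps - I := by
        rw [integral_sub (integrable_const _) hIps, integral_const]
        simp [hI]
      rw [← he]
      refine integral_mono ((integrable_const _).sub hIps) (hdist p) fun x => ?_
      have h := dist_triangle p x ps
      rw [dist_comm x ps] at h
      simp only
      linarith
    nlinarith [mul_le_mul_of_nonneg_left h2 h1β.le]
  -- continuity of G
  have hGcont : Continuous G := by
    rw [continuous_iff_continuousAt]
    intro p₀
    refine continuousAt_of_dominated
      (Filter.Eventually.of_forall fun p => (hfx β ξ p).aestronglyMeasurable)
      ?_ (((integrable_const (1:ℝ)).add (hdist p₀)).const_mul 2)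
      (Filter.Eventually.of_forall fun x => ?_)
    · filter_upwards [Metric.ball_mem_nhds p₀ one_pos] with p hp
      refine Filter.Eventually.of_forall fun x => ?_
      rw [Real.norm_eq_abs]
      refine le_trans (key β hβ0 hβ1.le ξ p x).2 ?_
      have h1 : dist p x ≤ dist p p₀ + dist p₀ x := dist_triangle p p₀ x
      have h2 : dist p p₀ < 1 := Metric.mem_ball.1 hp
      simp only [Pi.add_apply]
      linarith
    · have h1 : Continuous fun p : M => log p x :=
        hlog.comp (continuous_id.prodMk continuous_const)
      exact (h1.norm.add (((hdir ξ).const_smul β).inner h1)).continuousAt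
  -- the radius
  set R : ℝ := G ps / (1 - β) + I + 1 with hR
  have hRe : (1 - β) * R = G ps + (1 - β) * I + (1 - β) := by
    have hd : (1 - β) * (G ps / (1 - β)) = G ps := by field_simp
    rw [hR]; linear_combination hd
  have hGps : -(1 - β) * I ≤ G ps := by
    have := hGlow ps
    rw [dist_self] at this
    linarith
  have hR0 : 0 ≤ R := by
    have h : 0 ≤ (1 - β) * R := by rw [hRe]; nlinarith
    exact (mul_nonneg_iff_of_pos_left h1β).mp h
  have hSc : IsCompact (Metric.closedBall ps R) := isCompact_closedBall ps R
  obtain ⟨p₀, hp₀S, hmin⟩ := hSc.exists_isMinOn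
    ⟨ps, Metric.mem_closedBall_self hR0⟩ hGcont.continuousOn
  have hp₀ps : G p₀ ≤ G ps := isMinOn_iff.1 hmin ps (Metric.mem_closedBall_self hR0)
  have hglobal : ∀ q : M, G p₀ ≤ G q := by
    intro q
    by_cases hq : q ∈ Metric.closedBall ps R
    · exact isMinOn_iff.1 hmin q hq
    · have hd : R < dist q ps := by
        rw [Metric.mem_closedBall, not_le] at hq; exact hq
      have := hGlow q
      nlinarith [mul_lt_mul_of_pos_left hd h1β]
  have hsub : {p : M | ∀ q : M, G p ≤ G q} ⊆ Metric.closedBall ps R := by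
    intro p hp
    have h1 : G p ≤ G ps := hp ps
    have h2 := hGlow p
    rw [Metric.mem_closedBall]
    nlinarith
  have hclosed : IsClosed {p : M | ∀ q : M, G p ≤ G q} := by
    have he : {p : M | ∀ q : M, G p ≤ G q} = ⋂ q : M, {p : M | G p ≤ G q} := by
      ext p; simp [Set.mem_iInter]
    rw [he]
    exact isClosed_iInter fun q => isClosed_le hGcont continuous_const
  exact ⟨⟨p₀, hglobal⟩, hSc.of_isClosed_subset hclosed hsub⟩
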